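/- Let X be a finite simple graph all of whose odd cycles have length at least 2k+1 (k ≥ 1). Then for every vertex x, the subgraph of X induced on the metric ball B(x, k−1) contains no odd cycle (equivalently, it is bipartite: it admits a proper 2-coloring). -/

import Mathlib

open SimpleGraph

/-- Every odd closed walk contains an odd cycle of at most the same length. -/
lemma exists_odd_cycle_of_odd_closed_walk {V : Type*} {X : SimpleGraph V} :
    ∀ n : ℕ, ∀ (v : V) (c : X.Walk v v), c.length = n → Odd n →
      ∃ (u : V) (d : X.Walk u u), d.IsCycle ∧ Odd d.length ∧ d.length ≤ n := by
  classical
  intro n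
  induction n using Nat.strong_induction_on with
  | _ n IH =>
    intro v c hc hodd
    have hne : ¬ c.Nil := by
      rw [SimpleGraph.Walk.nil_iff_length_eq, hc]
      rintro rfl
      simp at hodd
    by_cases hnd : c.support.tail.Nodup
    · -- `c` is a cycle
      obtain ⟨z, h, p, rfl⟩ := SimpleGraph.Walk.not_nil_iff.mp hne
      have hp : p.IsPath := by
        rw [SimpleGraph.Walk.isPath_def]
        simpa using hnd
      have hedge : s(v, z) ∉ p.edges := by
        intro hmem
        have hpn : ¬ p.Nil := by
          intro hnil
          rw [SimpleGraph.Walk.nil_iff_length_eq] at hnil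
          have := SimpleGraph.Walk.length_edges p
          rw [hnil] at this
          exact List.not_mem_nil (List.length_eq_zero_iff.mp this ▸ hmem)
        obtain ⟨w, h', q, rfl⟩ := SimpleGraph.Walk.not_nil_iff.mp hpn
        have hsup : (z :: q.support).Nodup := by
          simpa [SimpleGraph.Walk.support_cons] using hp.support_nodup
        rw [SimpleGraph.Walk.edges_cons] at hmem
        rcases List.mem_cons.mp hmem with heq | hq
        · -- first edge equals s(v,z): forces length 2
          rcases Sym2.eq_iff.mp heq with ⟨hvz, _⟩ | ⟨hvw, _⟩
          · exact h.ne hvz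
          · subst hvw
            -- q : Walk v v with nodup support, so q is nil
            have hqnil : q.Nil := by
              by_contra hqn
              obtain ⟨a, h'', r, rfl⟩ := SimpleGraph.Walk.not_nil_iff.mp hqn
              have : v ∈ r.support := r.end_mem_support
              have hnodup : (v :: r.support).Nodup := by
                simpa [SimpleGraph.Walk.support_cons] using (List.nodup_cons.mp hsup).2
              exact (List.nodup_cons.mp hnodup).1 this
            rw [SimpleGraph.Walk.nil_iff_length_eq] at hqnil
            have hn2 : n = 2 := by
              simp [SimpleGraph.Walk.length_cons, hqnil] at hc
              omega
            rw [hn2] at hodd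
            exact (by decide : ¬ Odd 2) hodd
        · have : z ∈ q.support := SimpleGraph.Walk.snd_mem_support_of_mem_edges q hq
          exact (List.nodup_cons.mp hsup).1 this
      refine ⟨v, SimpleGraph.Walk.cons h p,
        (SimpleGraph.Walk.cons_isCycle_iff p h).mpr ⟨hp, hedge⟩, hc ▸ hodd, le_of_eq hc⟩
    · -- split the walk at a repeated vertex
      obtain ⟨y, hy⟩ := List.exists_duplicate_iff_not_nodup.mpr hnd
      have hcount : 2 ≤ c.support.tail.count y := List.duplicate_iff_two_le_count.mp hy
      have hymem : y ∈ c.support := List.mem_of_mem_tail hy.mem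
      set c' := c.rotate y hymem with hc'
      have hlen' : c'.length = n := by
        have := (SimpleGraph.Walk.rotate_darts c y hymem).perm.length_eq
        rwa [SimpleGraph.Walk.length_darts, SimpleGraph.Walk.length_darts, hc] at this
      have hne' : ¬ c'.Nil := by
        rw [SimpleGraph.Walk.nil_iff_length_eq, hlen']
        rintro rfl; simp at hodd
      have hcount' : 2 ≤ c'.support.tail.count y :=
        (SimpleGraph.Walk.support_rotate c y hymem).perm.count_eq y ▸ hcount
      obtain ⟨z, h, p, hcp⟩ := SimpleGraph.Walk.not_nil_iff.mp hne'
      have hpcount : 2 ≤ p.support.count y := by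
        rw [hcp] at hcount'
        simpa using hcount'
      have hyp : y ∈ p.support := List.count_pos_iff.mp (by omega)
      set t := p.takeUntil y hyp with ht
      set dr := p.dropUntil y hyp with hdr
      have hspec : t.append dr = p := p.take_spec hyp
      have hlens : t.length + dr.length = p.length := by
        rw [← hspec, SimpleGraph.Walk.length_append]
      have hplen : p.length + 1 = n := by
        rw [hcp] at hlen'
        simpa [SimpleGraph.Walk.length_cons] using hlen'
      -- dr is not nil
      have hdrpos : 1 ≤ dr.length := by
        have hsupp : p.support.count y = t.support.count y + dr.support.tail.count y := by
          rw [← hspec, SimpleGraph.Walk.support_append, List.count_append]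
        have h1 : t.support.count y = 1 := p.count_support_takeUntil_eq_one hyp
        have : 1 ≤ dr.support.tail.count y := by omega
        have hmem : y ∈ dr.support.tail := List.count_pos_iff.mp (by omega)
        have : dr.support.tail ≠ [] := by
          intro hnil; rw [hnil] at hmem; exact List.not_mem_nil hmem
        have hlsup := dr.length_support
        cases hdl : dr.length with
        | zero =>
          rw [hdl] at hlsup
          have : dr.support.tail = [] := by
            have := List.length_tail (l := dr.support)
            rw [hlsup] at this
            simpa using List.length_eq_zero_iff.mp (by omega)
          exact absurd this ‹dr.support.tail ≠ []›
        | succ m => omega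
      -- two closed subwalks
      have hd1 : (SimpleGraph.Walk.cons h t).length = t.length + 1 := by
        simp [SimpleGraph.Walk.length_cons]
      have hsum : (t.length + 1) + dr.length = n := by omega
      have hone : Odd (t.length + 1) ∨ Odd dr.length := by
        rw [Nat.odd_iff] at hodd ⊢
        rw [Nat.odd_iff]
        omega
      rcases hone with ho | ho
      · obtain ⟨u, d, hd, hdo, hdl⟩ :=
          IH (t.length + 1) (by omega) y (SimpleGraph.Walk.cons h t) hd1 ho
        exact ⟨u, d, hd, hdo, by omega⟩
      · obtain ⟨u, d, hd, hdo, hdl⟩ := IH dr.length (by omega) y dr rfl ho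
        exact ⟨u, d, hd, hdo, by omega⟩

/-- Along any walk in a `ZMod 2`-colored graph the color changes with parity of length. -/
lemma coloring_walk_parity {V : Type*} {G : SimpleGraph V} (C : G.Coloring (ZMod 2))
    {a b : V} (p : G.Walk a b) : C b = C a + p.length := by
  induction p with
  | nil => simp
  | @cons a' b' c' hadj q ih =>
    have hne : C a' ≠ C b' := C.valid hadj
    have hstep : C b' = C a' + 1 := by
      revert hne; generalize C a' = s; generalize C b' = t; revert s t; decide
    rw [ih, hstep, SimpleGraph.Walk.length_cons]
    push_cast
    ring

theorem ball_no_odd_cycle {V : Type*} [Fintype V] (X : SimpleGraph V) (k : ℕ) (hk : 1 ≤ k)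
    (hodd : ∀ (v : V) (w : X.Walk v v), w.IsCycle → Odd w.length → 2 * k + 1 ≤ w.length) :
    ∀ x : V,
      (∀ (v : ({y : V | ∃ w : X.Walk x y, w.length ≤ k - 1} : Set V))
          (w : (X.induce {y : V | ∃ w : X.Walk x y, w.length ≤ k - 1}).Walk v v),
          w.IsCycle → ¬ Odd w.length) ∧
      (X.induce {y : V | ∃ w : X.Walk x y, w.length ≤ k - 1}).Colorable 2 := by
  intro x
  set S : Set V := {y : V | ∃ w : X.Walk x y, w.length ≤ k - 1} with hS
  -- the distance-parity coloring
  have hvalid : ∀ u v : S, (X.induce S).Adj u v →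
      ((X.dist x ↑u : ZMod 2)) ≠ (X.dist x ↑v : ZMod 2) := by
    rintro ⟨u, wu, hwu⟩ ⟨v, wv, hwv⟩ hadj heq
    have hadj' : X.Adj u v := hadj
    have hru : X.Reachable x u := ⟨wu⟩
    have hrv : X.Reachable x v := ⟨wv⟩
    obtain ⟨pu, hpu⟩ := hru.exists_walk_length_eq_dist
    obtain ⟨pv, hpv⟩ := hrv.exists_walk_length_eq_dist
    have hdu : X.dist x u ≤ k - 1 := le_trans (SimpleGraph.dist_le wu) hwu
    have hdv : X.dist x v ≤ k - 1 := le_trans (SimpleGraph.dist_le wv) hwv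
    -- parity
    have hmod : X.dist x u % 2 = X.dist x v % 2 := by
      have := (ZMod.natCast_eq_natCast_iff _ _ _).mp heq
      simpa [Nat.ModEq] using this
    -- odd closed walk through the edge
    set W : X.Walk x x := pu.append (SimpleGraph.Walk.cons hadj' pv.reverse) with hW
    have hWlen : W.length = X.dist x u + 1 + X.dist x v := by
      simp [hW, SimpleGraph.Walk.length_append, SimpleGraph.Walk.length_cons,
        SimpleGraph.Walk.length_reverse, hpu, hpv]
      omega
    have hWodd : Odd W.length := by
      rw [hWlen, Nat.odd_iff]; omega
    obtain ⟨u', d, hd, hdo, hdl⟩ :=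
      exists_odd_cycle_of_odd_closed_walk W.length x W rfl hWodd
    have hlong := hodd u' d hd hdo
    rw [hWlen] at hdl
    omega
  have C : (X.induce S).Coloring (ZMod 2) :=
    SimpleGraph.Coloring.mk (fun v => (X.dist x ↑v : ZMod 2)) (fun {u v} h => hvalid u v h)
  constructor
  · intro v w _ hwodd
    have hpar := coloring_walk_parity C w
    have hz : ((w.length : ℕ) : ZMod 2) = 0 := by
      have := hpar
      nth_rewrite 1 [show C v = C v + 0 by ring] at this
      exact (add_left_cancel this).symm
    rw [ZMod.natCast_eq_zero_iff] at hz
    rw [Nat.odd_iff] at hwodd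
    omega
  · have := C.colorable
    simpa using this
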